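/- Modal L²-stability of the truncated PML problem in the high-mode regime (inequality (3.12)/(3.14) of the paper): Assume σ₀ ≥ √3 and let ν ∈ ℝ satisfy ν² ≥ k²R² + λ k R̂². Let f : (0, R̂) → ℂ be measurable with ∫₀^{R̂} r |f(r)|² dr < ∞, and let v be admissible with a_ν(v,v) = ∫₀^{R̂} r f(r) · conj(v(r)) dr. Then ∫₀^{R̂} r |v(r)|² dr ≤ (λk)^{−2} ∫₀^{R̂} r |f(r)|² dr. -/

import Mathlib

open MeasureTheory

noncomputable section

/-- The PML medium property `σ(r)`: `0` for `0 ≤ r ≤ R` and `σ₀` for `r > R`. -/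
def sigPML (σ₀ R r : ℝ) : ℝ := if r ≤ R then 0 else σ₀

/-- `δ(r) = 0` for `0 ≤ r ≤ R` and `δ(r) = σ₀(r−R)/r` for `r > R`. -/
def delPML (σ₀ R r : ℝ) : ℝ := if r ≤ R then 0 else σ₀ * (r - R) / r

/-- `α(r) = 1 + iσ(r)`. -/
def alphaPML (σ₀ R r : ℝ) : ℂ := 1 + Complex.I * sigPML σ₀ R r

/-- `β(r) = 1 + iδ(r)`. -/
def betaPML (σ₀ R r : ℝ) : ℂ := 1 + Complex.I * delPML σ₀ R r

/-- `λ = R^{3/2} / (3 σ₀ R̂² L^{1/2})` with `L = R̂ − R`. -/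
def lamPML (σ₀ R Rh : ℝ) : ℝ := R ^ ((3 : ℝ) / 2) / (3 * σ₀ * Rh ^ 2 * (Rh - R) ^ ((1 : ℝ) / 2))

/-- A function `v : (0, R̂] → ℂ` is admissible if it is locally absolutely continuous with
derivative `v′` and the integrals `∫₀^{R̂} r|v′|²`, `∫₀^{R̂} (1/r)|v|²`, `∫₀^{R̂} r|v|²` are
all finite. -/
def Admissible (Rh : ℝ) (v v' : ℝ → ℂ) : Prop :=
  AEStronglyMeasurable v' (volume.restrict (Set.Ioc 0 Rh)) ∧
  (∀ a b : ℝ, 0 < a → a ≤ b → b ≤ Rh → v b - v a = ∫ t in a..b, v' t) ∧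
  IntegrableOn (fun r => r * ‖v' r‖ ^ 2) (Set.Ioc 0 Rh) ∧
  IntegrableOn (fun r => ‖v r‖ ^ 2 / r) (Set.Ioc 0 Rh) ∧
  IntegrableOn (fun r => r * ‖v r‖ ^ 2) (Set.Ioc 0 Rh)

/-- The modal PML sesquilinear form evaluated at `(v, v)`:
`a_ν(v,v) = ∫₀^{R̂} ((β/α) r |v′|² + ((ν²/r)(α/β) − k²αβr) |v|²) dr`. -/
def aForm (k σ₀ R Rh ν : ℝ) (v v' : ℝ → ℂ) : ℂ :=
  ∫ r in Set.Ioc 0 Rh,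
    ((betaPML σ₀ R r / alphaPML σ₀ R r) * (r : ℂ) * (‖v' r‖ ^ 2 : ℝ) +
      (((ν ^ 2 : ℝ) / r) * (alphaPML σ₀ R r / betaPML σ₀ R r) -
        (k ^ 2 : ℝ) * alphaPML σ₀ R r * betaPML σ₀ R r * r) * (‖v r‖ ^ 2 : ℝ))

/-! ### Auxiliary lemmas -/


lemma Qpos_aux (u R r : ℝ) (hu : 3 ≤ u) :
    0 ≤ (u^2-1)*r^2 - (2*u^2-u+1)*(R*r) + u*(u+1)*R^2 := by
  have hE : 0 ≤ 8*u^3 - 9*u^2 - 2*u - 1 := by nlinarith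
  nlinarith [sq_nonneg (2*(u^2-1)*r - (2*u^2-u+1)*R), mul_nonneg hE (sq_nonneg R), sq_nonneg (u-3)]

lemma Tpos_aux (u R r : ℝ) (hu : 3 ≤ u) (hR : 0 < R) (hr : R < r) :
    (r - u*(r-R)) * (r^2 + u*(r-R)^2) ≤ R^2*(r + u*(r-R)) := by
  nlinarith [mul_nonneg (sub_pos.2 hr).le (Qpos_aux u R r hu)]

lemma pml_key (k σ₀ R Rh ν r c : ℝ) (hσ : Real.sqrt 3 ≤ σ₀)
    (hR : 0 < R) (hRr : R < r) (hrRh : r ≤ Rh) (hc : 0 < c)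
    (hν : k^2*R^2 + c*Rh^2 ≤ ν^2) :
    c * r ≤ ν^2/r * ((1 + (σ₀*(r-R)/r)*σ₀)/(1+(σ₀*(r-R)/r)^2))
      - k^2*((1-σ₀*(σ₀*(r-R)/r))*r) := by
  have hr0 : 0 < r := hR.trans hRr
  have hσ0 : 0 < σ₀ := lt_of_lt_of_le (by positivity) hσ
  set d : ℝ := σ₀*(r-R)/r with hd
  have hd0 : 0 ≤ d := by
    apply div_nonneg _ hr0.le; nlinarith
  have hdσ : d ≤ σ₀ := by
    rw [hd, div_le_iff₀ hr0]; nlinarith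
  have hu : 3 ≤ σ₀^2 := by
    have h3 : Real.sqrt 3 ^ 2 = 3 := Real.sq_sqrt (by norm_num)
    nlinarith [Real.sqrt_nonneg 3]
  have ha : d * r = σ₀*(r-R) := by rw [hd]; field_simp
  have h3 := Tpos_aux (σ₀^2) R r hu hR hRr
  have hT : (1-σ₀*d)*((1+d^2)*r^2) ≤ R^2*(1+σ₀*d) := by
    have key' : ((1-σ₀*d)*((1+d^2)*r^2))*r ≤ (R^2*(1+σ₀*d))*r := by
      have e1 : ((1-σ₀*d)*((1+d^2)*r^2))*r = (r - σ₀*(d*r))*(r^2 + (d*r)^2) := by ring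
      have e2 : (R^2*(1+σ₀*d))*r = R^2*(r + σ₀*(d*r)) := by ring
      rw [e1, e2, ha]
      nlinarith [h3]
    exact le_of_mul_le_mul_right key' hr0
  have hS : (1+d^2)*r^2 ≤ Rh^2*(1+σ₀*d) := by
    nlinarith [mul_le_mul_of_nonneg_right hdσ hd0, mul_self_le_mul_self hr0.le hrRh,
      mul_nonneg hd0 (mul_nonneg hσ0.le hd0)]
  rw [← sub_nonneg]
  have heq : ν^2/r * ((1 + d*σ₀)/(1+d^2)) - k^2*((1-σ₀*d)*r) - c*r
      = (ν^2*(1+σ₀*d) - k^2*((1-σ₀*d)*((1+d^2)*r^2)) - c*((1+d^2)*r^2)) / (r*(1+d^2)) := by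
    field_simp
  rw [heq]
  apply div_nonneg _ (by positivity)
  have hνp : (k^2*R^2 + c*Rh^2)*(1+σ₀*d) ≤ ν^2*(1+σ₀*d) :=
    mul_le_mul_of_nonneg_right hν (by positivity)
  nlinarith [mul_le_mul_of_nonneg_left hT (sq_nonneg k), mul_le_mul_of_nonneg_left hS hc.le]

lemma inner_key (k R Rh ν r c : ℝ) (hr0 : 0 < r) (hrR : r ≤ R) (hRRh : R < Rh) (hc : 0 < c)
    (hν : k^2*R^2 + c*Rh^2 ≤ ν^2) :
    c * r ≤ ν^2/r - k^2*r := by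
  rw [← sub_nonneg]
  have heq : ν^2/r - k^2*r - c*r = (ν^2 - (k^2 + c)*r^2) / r := by field_simp; ring
  rw [heq]
  apply div_nonneg _ hr0.le
  nlinarith [mul_self_le_mul_self hr0.le hrR, mul_self_le_mul_self hr0.le (hrR.trans hRRh.le)]

lemma M_re_aux (x y r s d : ℝ) :
    ((x:ℂ)/(r:ℂ) * ((1+Complex.I*s)/(1+Complex.I*d))
      - (y:ℂ)*(1+Complex.I*s)*(1+Complex.I*d)*(r:ℂ)).re
      = x/r * ((1+d*s)/(1+d^2)) - y*((1-s*d)*r) := by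
  have h1 : (x:ℂ)/(r:ℂ) * ((1+Complex.I*s)/(1+Complex.I*d))
      = ((x/r : ℝ):ℂ) * ((1+Complex.I*s)/(1+Complex.I*d)) := by push_cast; ring
  rw [Complex.sub_re, h1, Complex.re_ofReal_mul, Complex.div_re]
  simp [Complex.normSq_apply, Complex.mul_re, Complex.mul_im]
  ring_nf

lemma BA_re_aux (s d : ℝ) :
    ((1+Complex.I*(d:ℝ)) / (1+Complex.I*(s:ℝ))).re = (1+s*d)/(1+s^2) := by
  rw [Complex.div_re]
  simp [Complex.normSq_apply]
  ring_nf

lemma re_mul_real2 (z : ℂ) (x y : ℝ) : (z * (x:ℂ) * (y:ℂ)).re = z.re * x * y := by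
  simp [Complex.mul_re]

lemma re_mul_real (z : ℂ) (y : ℝ) : (z * (y:ℂ)).re = z.re * y := by
  simp [Complex.mul_re]

lemma norm_one_add_I_le (d σ₀ : ℝ) (h0 : 0 ≤ d) (h1 : d ≤ σ₀) :
    ‖(1 + Complex.I * (d:ℝ) : ℂ)‖ ≤ 1 + σ₀ := by
  calc ‖(1 + Complex.I * (d:ℝ) : ℂ)‖ ≤ ‖(1:ℂ)‖ + ‖Complex.I * (d:ℝ)‖ := norm_add_le _ _
    _ = 1 + |d| := by simp
    _ ≤ 1 + σ₀ := by rw [abs_of_nonneg h0]; linarith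

lemma one_le_norm_one_add_I (d : ℝ) : 1 ≤ ‖(1 + Complex.I * (d:ℝ) : ℂ)‖ := by
  have h : (1 + Complex.I * (d:ℝ) : ℂ).re = 1 := by simp
  calc (1:ℝ) = (1 + Complex.I * (d:ℝ) : ℂ).re := h.symm
    _ ≤ ‖(1 + Complex.I * (d:ℝ) : ℂ)‖ := Complex.re_le_norm _

lemma sig_nonneg (σ₀ R r : ℝ) (h : 0 ≤ σ₀) : 0 ≤ sigPML σ₀ R r := by
  unfold sigPML; split <;> simp [h]

lemma sig_le (σ₀ R r : ℝ) (h : 0 ≤ σ₀) : sigPML σ₀ R r ≤ σ₀ := by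
  unfold sigPML; split <;> simp [h]

lemma del_nonneg (σ₀ R r : ℝ) (h : 0 ≤ σ₀) (hR : 0 ≤ R) (hr : 0 < r) :
    0 ≤ delPML σ₀ R r := by
  unfold delPML
  split
  · exact le_refl 0
  · rename_i hcase
    push_neg at hcase
    apply div_nonneg _ hr.le
    nlinarith

lemma del_le (σ₀ R r : ℝ) (h : 0 ≤ σ₀) (hR : 0 ≤ R) (hr : 0 < r) :
    delPML σ₀ R r ≤ σ₀ := by
  unfold delPML
  split
  · exact h
  · rename_i hcase
    push_neg at hcase
    rw [div_le_iff₀ hr]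
    nlinarith

lemma point_re_bound (k σ₀ R Rh ν c r a b : ℝ) (hσ : Real.sqrt 3 ≤ σ₀)
    (hR : 0 < R) (hRRh : R < Rh) (hr0 : 0 < r) (hrRh : r ≤ Rh) (hc : 0 < c)
    (hν : k^2*R^2 + c*Rh^2 ≤ ν^2) (ha : 0 ≤ a) (hb : 0 ≤ b) :
    c * (r * b) ≤ ((betaPML σ₀ R r / alphaPML σ₀ R r) * (r : ℂ) * (a : ℝ) +
      (((ν ^ 2 : ℝ) / r) * (alphaPML σ₀ R r / betaPML σ₀ R r) -
        (k ^ 2 : ℝ) * alphaPML σ₀ R r * betaPML σ₀ R r * r) * (b : ℝ)).re := by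
  have hσ0 : 0 < σ₀ := lt_of_lt_of_le (by positivity) hσ
  have hαe : alphaPML σ₀ R r = 1 + Complex.I * (sigPML σ₀ R r : ℝ) := rfl
  have hβe : betaPML σ₀ R r = 1 + Complex.I * (delPML σ₀ R r : ℝ) := rfl
  rw [Complex.add_re, hαe, hβe, re_mul_real2, re_mul_real, BA_re_aux, M_re_aux]
  set s := sigPML σ₀ R r with hs
  set d := delPML σ₀ R r with hd
  have hs0 : 0 ≤ s := sig_nonneg σ₀ R r hσ0.le
  have hd0 : 0 ≤ d := del_nonneg σ₀ R r hσ0.le hR.le hr0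
  have hM : c * r ≤ ν^2/r * ((1+d*s)/(1+d^2)) - k^2*((1-s*d)*r) := by
    by_cases hcase : r ≤ R
    · have hs' : s = 0 := by rw [hs]; unfold sigPML; rw [if_pos hcase]
      have hd' : d = 0 := by rw [hd]; unfold delPML; rw [if_pos hcase]
      rw [hs', hd']
      norm_num
      exact inner_key k R Rh ν r c hr0 hcase hRRh hc hν
    · push_neg at hcase
      have hs' : s = σ₀ := by rw [hs]; unfold sigPML; rw [if_neg (not_le.2 hcase)]
      have hd' : d = σ₀ * (r - R) / r := by rw [hd]; unfold delPML; rw [if_neg (not_le.2 hcase)]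
      rw [hs', hd']
      exact pml_key k σ₀ R Rh ν r c hσ hR hcase hrRh hc hν
  have h1 : 0 ≤ (1+s*d)/(1+s^2) := div_nonneg (by nlinarith) (by positivity)
  nlinarith [mul_le_mul_of_nonneg_right hM hb, mul_nonneg (mul_nonneg h1 hr0.le) ha]

lemma point_norm_bound (k σ₀ R Rh ν r a b : ℝ) (hσ0 : 0 < σ₀)
    (hR : 0 < R) (hr0 : 0 < r) (ha : 0 ≤ a) (hb : 0 ≤ b) :
    ‖(betaPML σ₀ R r / alphaPML σ₀ R r) * (r : ℂ) * (a : ℝ) +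
      (((ν ^ 2 : ℝ) / r) * (alphaPML σ₀ R r / betaPML σ₀ R r) -
        (k ^ 2 : ℝ) * alphaPML σ₀ R r * betaPML σ₀ R r * r) * (b : ℝ)‖ ≤
      (1+σ₀)*(r*a) + ((ν^2*(1+σ₀))*(b/r) + (k^2*(1+σ₀)^2)*(r*b)) := by
  have hαe : alphaPML σ₀ R r = 1 + Complex.I * (sigPML σ₀ R r : ℝ) := rfl
  have hβe : betaPML σ₀ R r = 1 + Complex.I * (delPML σ₀ R r : ℝ) := rfl
  have hs0 : 0 ≤ sigPML σ₀ R r := sig_nonneg σ₀ R r hσ0.le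
  have hd0 : 0 ≤ delPML σ₀ R r := del_nonneg σ₀ R r hσ0.le hR.le hr0
  have hα1 : 1 ≤ ‖alphaPML σ₀ R r‖ := by rw [hαe]; exact one_le_norm_one_add_I _
  have hβ1 : 1 ≤ ‖betaPML σ₀ R r‖ := by rw [hβe]; exact one_le_norm_one_add_I _
  have hαn : ‖alphaPML σ₀ R r‖ ≤ 1 + σ₀ := by
    rw [hαe]; exact norm_one_add_I_le _ _ hs0 (sig_le σ₀ R r hσ0.le)
  have hβn : ‖betaPML σ₀ R r‖ ≤ 1 + σ₀ := by
    rw [hβe]; exact norm_one_add_I_le _ _ hd0 (del_le σ₀ R r hσ0.le hR.le hr0)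
  have hα0 : 0 < ‖alphaPML σ₀ R r‖ := lt_of_lt_of_le one_pos hα1
  have hβ0 : 0 < ‖betaPML σ₀ R r‖ := lt_of_lt_of_le one_pos hβ1
  have hν2 : (0:ℝ) ≤ ν^2 := sq_nonneg ν
  have hk2 : (0:ℝ) ≤ k^2 := sq_nonneg k
  refine le_trans (norm_add_le _ _) ?_
  have t1 : ‖(betaPML σ₀ R r / alphaPML σ₀ R r) * (r : ℂ) * ((a : ℝ):ℂ)‖ ≤ (1+σ₀)*(r*a) := by
    rw [norm_mul, norm_mul, norm_div]
    have e1 : ‖((r:ℝ):ℂ)‖ = r := by simp [abs_of_pos hr0]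
    have e2 : ‖((a:ℝ):ℂ)‖ = a := by simp [abs_of_nonneg ha]
    rw [e1, e2]
    have h2 : ‖betaPML σ₀ R r‖ / ‖alphaPML σ₀ R r‖ ≤ 1 + σ₀ :=
      le_trans (div_le_self hβ0.le hα1) hβn
    calc ‖betaPML σ₀ R r‖ / ‖alphaPML σ₀ R r‖ * r * a ≤ (1+σ₀) * r * a := by
          have := mul_le_mul_of_nonneg_right (mul_le_mul_of_nonneg_right h2 hr0.le) ha
          linarith
      _ = (1+σ₀)*(r*a) := by ring
  have t2 : ‖(((ν ^ 2 : ℝ) / r : ℂ) * (alphaPML σ₀ R r / betaPML σ₀ R r) -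
        ((k ^ 2 : ℝ):ℂ) * alphaPML σ₀ R r * betaPML σ₀ R r * (r:ℂ)) * ((b : ℝ):ℂ)‖ ≤
      (ν^2*(1+σ₀))*(b/r) + (k^2*(1+σ₀)^2)*(r*b) := by
    rw [norm_mul]
    have e2 : ‖((b:ℝ):ℂ)‖ = b := by simp [abs_of_nonneg hb]
    rw [e2]
    refine le_trans (mul_le_mul_of_nonneg_right (norm_sub_le _ _) hb) ?_
    have u1 : ‖(((ν ^ 2 : ℝ):ℂ) / (r:ℂ)) * (alphaPML σ₀ R r / betaPML σ₀ R r)‖ ≤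
        ν^2/r * (1+σ₀) := by
      rw [norm_mul, norm_div, norm_div]
      have e3 : ‖(((ν^2:ℝ)):ℂ)‖ = ν^2 := by simp [abs_of_nonneg hν2]
      have e4 : ‖((r:ℝ):ℂ)‖ = r := by simp [abs_of_pos hr0]
      rw [e3, e4]
      have h2 : ‖alphaPML σ₀ R r‖ / ‖betaPML σ₀ R r‖ ≤ 1 + σ₀ :=
        le_trans (div_le_self hα0.le hβ1) hαn
      exact mul_le_mul_of_nonneg_left h2 (by positivity)
    have u2 : ‖((k ^ 2 : ℝ):ℂ) * alphaPML σ₀ R r * betaPML σ₀ R r * (r:ℂ)‖ ≤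
        k^2*(1+σ₀)^2*r := by
      rw [norm_mul, norm_mul, norm_mul]
      have e3 : ‖(((k^2:ℝ)):ℂ)‖ = k^2 := by simp [abs_of_nonneg hk2]
      have e4 : ‖((r:ℝ):ℂ)‖ = r := by simp [abs_of_pos hr0]
      rw [e3, e4]
      have : ‖alphaPML σ₀ R r‖ * ‖betaPML σ₀ R r‖ ≤ (1+σ₀)^2 := by
        nlinarith
      nlinarith [mul_le_mul_of_nonneg_left this hk2]
    calc (‖(((ν ^ 2 : ℝ):ℂ) / (r:ℂ)) * (alphaPML σ₀ R r / betaPML σ₀ R r)‖ +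
          ‖((k ^ 2 : ℝ):ℂ) * alphaPML σ₀ R r * betaPML σ₀ R r * (r:ℂ)‖) * b ≤
        (ν^2/r * (1+σ₀) + k^2*(1+σ₀)^2*r) * b := by
          exact mul_le_mul_of_nonneg_right (add_le_add u1 u2) hb
      _ = (ν^2*(1+σ₀))*(b/r) + (k^2*(1+σ₀)^2)*(r*b) := by field_simp
  linarith

/-- Modal L²-stability of the truncated PML problem in the high-mode regime: if `σ₀ ≥ √3`,
`ν² ≥ k²R² + λkR̂²`, `f` is measurable with `∫₀^{R̂} r|f|² < ∞`, and `v` is admissible with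
`a_ν(v,v) = ∫₀^{R̂} r f conj(v) dr`, then `∫₀^{R̂} r|v|² ≤ (λk)⁻² ∫₀^{R̂} r|f|²`. -/
theorem modal_L2_stability_high_modes (k σ₀ R Rh ν : ℝ) (f v v' : ℝ → ℂ)
    (hk : 0 < k) (hσ₀ : 0 < σ₀) (hσ₀' : Real.sqrt 3 ≤ σ₀) (hR : 0 < R) (hRRh : R < Rh)
    (hν : k ^ 2 * R ^ 2 + lamPML σ₀ R Rh * k * Rh ^ 2 ≤ ν ^ 2)
    (hfmeas : AEStronglyMeasurable f (volume.restrict (Set.Ioc 0 Rh)))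
    (hfint : IntegrableOn (fun r => r * ‖f r‖ ^ 2) (Set.Ioc 0 Rh))
    (hv : Admissible Rh v v')
    (heq : aForm k σ₀ R Rh ν v v' =
      ∫ r in Set.Ioc 0 Rh, (r : ℂ) * f r * starRingEnd ℂ (v r)) :
    (∫ r in Set.Ioc 0 Rh, r * ‖v r‖ ^ 2) ≤
      (lamPML σ₀ R Rh * k) ⁻¹ ^ 2 * ∫ r in Set.Ioc 0 Rh, r * ‖f r‖ ^ 2 := by
  obtain ⟨hv'meas, hftc, hint1, hint2, hint3⟩ := hv
  have hRh0 : 0 < Rh := hR.trans hRRh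
  have hlam : 0 < lamPML σ₀ R Rh := by
    unfold lamPML
    have h1 : (0:ℝ) < R ^ ((3:ℝ)/2) := Real.rpow_pos_of_pos hR _
    have h2 : (0:ℝ) < (Rh - R) ^ ((1:ℝ)/2) := Real.rpow_pos_of_pos (sub_pos.2 hRRh) _
    positivity
  set c := lamPML σ₀ R Rh * k with hcdef
  have hc : 0 < c := mul_pos hlam hk
  set μ := volume.restrict (Set.Ioc (0:ℝ) Rh) with hμ
  set F : ℝ → ℂ := fun r =>
    ((betaPML σ₀ R r / alphaPML σ₀ R r) * (r : ℂ) * (‖v' r‖ ^ 2 : ℝ) +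
      (((ν ^ 2 : ℝ) / r) * (alphaPML σ₀ R r / betaPML σ₀ R r) -
        (k ^ 2 : ℝ) * alphaPML σ₀ R r * betaPML σ₀ R r * r) * (‖v r‖ ^ 2 : ℝ)) with hFdef
  have haF : aForm k σ₀ R Rh ν v v' = ∫ r, F r ∂μ := rfl
  have haepos : ∀ᵐ r ∂μ, r ∈ Set.Ioc (0:ℝ) Rh := ae_restrict_mem measurableSet_Ioc
  -- measurability
  have msig : Measurable (sigPML σ₀ R) :=
    Measurable.ite measurableSet_Iic measurable_const measurable_const
  have mdel : Measurable (delPML σ₀ R) :=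
    Measurable.ite measurableSet_Iic measurable_const
      ((measurable_const.mul (measurable_id.sub measurable_const)).div measurable_id)
  have malpha : Measurable (alphaPML σ₀ R) :=
    measurable_const.add (measurable_const.mul (Complex.measurable_ofReal.comp msig))
  have mbeta : Measurable (betaPML σ₀ R) :=
    measurable_const.add (measurable_const.mul (Complex.measurable_ofReal.comp mdel))
  have mv2 : AEStronglyMeasurable (fun r => (‖v r‖^2 : ℝ)) μ := by
    refine (hint2.aestronglyMeasurable.mul aestronglyMeasurable_id).congr ?_
    filter_upwards [haepos] with r hr
    show ‖v r‖ ^ 2 / r * r = ‖v r‖ ^ 2; exact div_mul_cancel₀ _ (ne_of_gt hr.1)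
  have mv'2 : AEStronglyMeasurable (fun r => (‖v' r‖^2 : ℝ)) μ :=
    (continuous_pow 2).comp_aestronglyMeasurable hv'meas.norm
  have hFmeas : AEStronglyMeasurable F μ := by
    apply AEStronglyMeasurable.add
    · exact (((mbeta.div malpha).mul Complex.measurable_ofReal).aestronglyMeasurable.mul
        (Complex.continuous_ofReal.comp_aestronglyMeasurable mv'2))
    · refine AEStronglyMeasurable.mul ?_ (Complex.continuous_ofReal.comp_aestronglyMeasurable mv2)
      exact (((measurable_const.div Complex.measurable_ofReal).mul
        (malpha.div mbeta)).sub
        (((measurable_const.mul malpha).mul mbeta).mul Complex.measurable_ofReal)).aestronglyMeasurable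
  -- integrability of F
  have hgint : Integrable (fun r => (1+σ₀)*(r*‖v' r‖^2) +
      ((ν^2*(1+σ₀))*(‖v r‖^2/r) + (k^2*(1+σ₀)^2)*(r*‖v r‖^2))) μ :=
    (hint1.const_mul _).add ((hint2.const_mul _).add (hint3.const_mul _))
  have hFint : Integrable F μ := by
    refine Integrable.mono' hgint hFmeas ?_
    filter_upwards [haepos] with r hr
    exact point_norm_bound k σ₀ R Rh ν r (‖v' r‖^2) (‖v r‖^2) hσ₀ hR hr.1
      (by positivity) (by positivity)
  -- step 1 : c * A ≤ Re (aForm)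
  have hre : ∫ r, (F r).re ∂μ = (∫ r, F r ∂μ).re := by
    have h := Complex.reCLM.integral_comp_comm hFint
    simpa using h
  have hFre_int : Integrable (fun r => (F r).re) μ := by
    have h := Complex.reCLM.integrable_comp hFint
    simpa using h
  have step1 : c * (∫ r, r * ‖v r‖^2 ∂μ) ≤ (aForm k σ₀ R Rh ν v v').re := by
    rw [haF, ← hre, ← integral_const_mul]
    refine integral_mono_ae (hint3.const_mul c) hFre_int ?_
    filter_upwards [haepos] with r hr
    have := point_re_bound k σ₀ R Rh ν c r (‖v' r‖^2) (‖v r‖^2) hσ₀' hR hRRh hr.1 hr.2 hc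
      hν (by positivity) (by positivity)
    simpa [hFdef] using this
  -- step 2 : Re (aForm) ≤ (2c)⁻¹ B + (c/2) A
  have hg2int : Integrable (fun r => (2*c)⁻¹*(r*‖f r‖^2) + (c/2)*(r*‖v r‖^2)) μ :=
    (hfint.const_mul _).add (hint3.const_mul _)
  have step2 : (aForm k σ₀ R Rh ν v v').re ≤
      (2*c)⁻¹*(∫ r, r*‖f r‖^2 ∂μ) + (c/2)*(∫ r, r*‖v r‖^2 ∂μ) := by
    rw [heq]
    calc (∫ r, (r:ℂ) * f r * starRingEnd ℂ (v r) ∂μ).re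
        ≤ ‖∫ r, (r:ℂ) * f r * starRingEnd ℂ (v r) ∂μ‖ := by
          exact Complex.re_le_norm _
      _ ≤ ∫ r, ‖(r:ℂ) * f r * starRingEnd ℂ (v r)‖ ∂μ := norm_integral_le_integral_norm _
      _ ≤ ∫ r, ((2*c)⁻¹*(r*‖f r‖^2) + (c/2)*(r*‖v r‖^2)) ∂μ := by
          refine integral_mono_of_nonneg (Filter.Eventually.of_forall fun r => norm_nonneg _)
            hg2int ?_
          filter_upwards [haepos] with r hr
          have hnorm : ‖(r:ℂ) * f r * starRingEnd ℂ (v r)‖ = r * (‖f r‖ * ‖v r‖) := by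
            rw [norm_mul, norm_mul]
            simp [abs_of_pos hr.1, mul_assoc]
          rw [hnorm]
          have base : ‖f r‖*‖v r‖ ≤ (2*c)⁻¹*‖f r‖^2 + (c/2)*‖v r‖^2 := by
            rw [← sub_nonneg]
            have hid : (2*c)⁻¹*‖f r‖^2 + (c/2)*‖v r‖^2 - ‖f r‖*‖v r‖
                = (2*c)⁻¹ * (‖f r‖ - c*‖v r‖)^2 := by
              field_simp
              ring
            rw [hid]
            positivity
          nlinarith [mul_le_mul_of_nonneg_left base hr.1.le]
      _ = (2*c)⁻¹*(∫ r, r*‖f r‖^2 ∂μ) + (c/2)*(∫ r, r*‖v r‖^2 ∂μ) := by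
          rw [integral_add (hfint.const_mul _) (hint3.const_mul _),
            integral_const_mul, integral_const_mul]
  -- conclude
  set A := ∫ r, r*‖v r‖^2 ∂μ with hA
  set B := ∫ r, r*‖f r‖^2 ∂μ with hB
  have hAB : c*A ≤ (2*c)⁻¹*B + (c/2)*A := le_trans step1 step2
  have h2c : (2*c)⁻¹*B = B/(2*c) := by ring
  have h6 : (c*A)/2 ≤ B/(2*c) := by rw [← h2c]; linarith
  have h7 : (c*A)*(2*c) ≤ B*2 := (div_le_div_iff₀ two_pos (by positivity)).1 h6
  show A ≤ c⁻¹^2 * B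
  rw [inv_pow, inv_mul_eq_div, le_div_iff₀ (by positivity)]
  nlinarith

end
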